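/- Let $A$ and $B$ be commutative rings and let $\varphi : A \to B$ be a ring homomorphism such that $I = \varphi^{-1}(IB)$ holds for every ideal $I \subseteq A$. Then for every strictly increasing chain of prime ideals $\mathfrak{p}_0 \subset \mathfrak{p}_1 \subset \ldots \subset \mathfrak{p}_r$ of $A$ there exists a strictly increasing chain of prime ideals $\mathfrak{q}_0 \subset \mathfrak{q}_1 \subset \ldots \subset \mathfrak{q}_r$ of $B$ such that $\varphi^{-1}(\mathfrak{q}_i) = \mathfrak{p}_i$ for every $i = 0, \ldots, r$. -/

import Mathlib

set_option maxHeartbeats 1000000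
open Finset
section
variable {A B : Type*} [CommRing A] [CommRing B] (φ : A →+* B)

def auxQ (P : Ideal A) (hP : P.IsPrime) (E : Ideal B) : Ideal B where
  carrier := {t | ∃ a, a ∉ P ∧ t * φ a ∈ E}
  add_mem' := by
    rintro t t' ⟨a, ha, hta⟩ ⟨a', ha', hta'⟩
    refine ⟨a * a', fun h => ((hP.mem_or_mem h).elim ha ha'), ?_⟩
    have h1 : (t + t') * φ (a * a') = (t * φ a) * φ a' + (t' * φ a') * φ a := by
      simp only [map_mul]; ring
    rw [h1]
    exact E.add_mem (E.mul_mem_right _ hta) (E.mul_mem_right _ hta')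
  zero_mem' := ⟨1, fun h => hP.ne_top ((Ideal.eq_top_iff_one P).mpr h), by simp⟩
  smul_mem' := by
    rintro c t ⟨a, ha, hta⟩
    refine ⟨a, ha, ?_⟩
    have h1 : c • t * φ a = c * (t * φ a) := by simp [smul_eq_mul]; ring
    rw [h1]; exact E.mul_mem_left c hta

lemma mem_auxQ {P : Ideal A} {hP : P.IsPrime} {E : Ideal B} {t : B} :
    t ∈ auxQ φ P hP E ↔ ∃ a, a ∉ P ∧ t * φ a ∈ E := Iff.rfl

def auxE (pn : ℕ → Ideal A) (hpn : ∀ k, (pn k).IsPrime) : ℕ → Ideal B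
  | 0 => (pn 0).map φ
  | k+1 => (pn (k+1)).map φ ⊔ auxQ φ (pn k) (hpn k) (auxE pn hpn k)

lemma map_le_auxE (pn : ℕ → Ideal A) (hpn : ∀ k, (pn k).IsPrime) (k : ℕ) :
    (pn k).map φ ≤ auxE φ pn hpn k := by
  cases k with
  | zero => exact le_rfl
  | succ k => exact le_sup_left

lemma auxE_unwind (pn : ℕ → Ideal A) (hpn : ∀ k, (pn k).IsPrime) (k : ℕ) (t : B)
    (ht : t ∈ auxE φ pn hpn k) :
    ∃ a : ℕ → A, (∀ j, j < k → a j ∉ pn j) ∧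
      t * φ (∏ l ∈ range k, a l) ∈
        Ideal.map φ (∑ j ∈ range (k+1), Ideal.span {∏ l ∈ range j, a l} * pn j) := by
  induction k generalizing t with
  | zero =>
    refine ⟨fun _ => 1, fun j hj => absurd hj (Nat.not_lt_zero j), ?_⟩
    simpa only [auxE, zero_add, sum_range_one, prod_range_zero, Ideal.span_singleton_one,
      Ideal.top_mul, map_one, mul_one] using ht
  | succ k ih =>
    rw [show auxE φ pn hpn (k+1) =
      (pn (k+1)).map φ ⊔ auxQ φ (pn k) (hpn k) (auxE φ pn hpn k) from rfl] at ht
    obtain ⟨v, hv, u, hu, hvu⟩ := Submodule.mem_sup.mp ht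
    obtain ⟨b, hb, hub⟩ := (mem_auxQ φ).mp hu
    obtain ⟨a, haj, hmem⟩ := ih _ hub
    set a' := Function.update a k b with ha'
    refine ⟨a', ?_, ?_⟩
    · intro j hj
      rcases Nat.lt_succ_iff_lt_or_eq.mp hj with h | h
      · rw [ha', Function.update_of_ne (Nat.ne_of_lt h)]; exact haj j h
      · subst h; rw [ha', Function.update_self]; exact hb
    · have hprodeq : ∀ m, m ≤ k → ∏ l ∈ range m, a' l = ∏ l ∈ range m, a l := by
        intro m hm
        refine prod_congr rfl fun l hl => ?_
        rw [ha', Function.update_of_ne (Nat.ne_of_lt (lt_of_lt_of_le (mem_range.mp hl) hm))]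
      have hprod : ∏ l ∈ range (k+1), a' l = (∏ l ∈ range k, a l) * b := by
        rw [prod_range_succ, hprodeq k le_rfl, ha', Function.update_self]
      have hsum : (∑ j ∈ range (k+2), Ideal.span {∏ l ∈ range j, a' l} * pn j)
          = (∑ j ∈ range (k+1), Ideal.span {∏ l ∈ range j, a l} * pn j)
            ⊔ Ideal.span {∏ l ∈ range (k+1), a' l} * pn (k+1) := by
        rw [sum_range_succ, Ideal.add_eq_sup]
        congr 1
        refine sum_congr rfl fun j hj => ?_
        rw [hprodeq j (Nat.lt_succ_iff.mp (mem_range.mp hj))]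
      rw [hsum, Ideal.map_sup]
      have key1 : v * φ (∏ l ∈ range (k+1), a' l) ∈
          Ideal.map φ (Ideal.span {∏ l ∈ range (k+1), a' l} * pn (k+1)) := by
        rw [Ideal.map_mul, Ideal.map_span, Set.image_singleton,
          mul_comm v (φ (∏ l ∈ range (k+1), a' l))]
        exact Ideal.mul_mem_mul (Ideal.mem_span_singleton_self _) hv
      have key2 : u * φ (∏ l ∈ range (k+1), a' l) ∈
          Ideal.map φ (∑ j ∈ range (k+1), Ideal.span {∏ l ∈ range j, a l} * pn j) := by
        rw [hprod, map_mul]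
        have heq : u * (φ (∏ l ∈ range k, a l) * φ b)
            = u * φ b * φ (∏ l ∈ range k, a l) := by ring
        rw [heq]
        exact hmem
      rw [← hvu, add_mul]
      exact Submodule.add_mem (_ ⊔ _)
        (Submodule.mem_sup_right key1) (Submodule.mem_sup_left key2)

lemma peel (pn : ℕ → Ideal A) (hpn : ∀ k, (pn k).IsPrime) (r : ℕ)
    (hmono : ∀ i, i < r → pn i ≤ pn (i+1)) (a : ℕ → A) (ha : ∀ j, j < r → a j ∉ pn j)
    (s : A) :
    ∀ d i, i + d = r →
      s * (∏ l ∈ Ico i r, a l) ∈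
        ∑ j ∈ Ico i (r+1), Ideal.span {∏ l ∈ Ico i j, a l} * pn j →
      s ∈ pn r := by
  intro d
  induction d with
  | zero =>
    intro i hi hmem
    have hir : i = r := by omega
    subst hir
    rw [Finset.sum_eq_sum_Ico_succ_bot (Nat.lt_succ_self i), Ico_self, prod_empty,
      Ideal.span_singleton_one, Ideal.top_mul] at hmem
    simpa using hmem
  | succ d ih =>
    intro i hi hmem
    have hir : i < r := by omega
    rw [Finset.sum_eq_sum_Ico_succ_bot (by omega : i < r + 1), Ico_self,
      prod_empty, Ideal.span_singleton_one, Ideal.top_mul] at hmem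
    have hsum2 : ∑ j ∈ Ico (i+1) (r+1), Ideal.span {∏ l ∈ Ico i j, a l} * pn j
        = Ideal.span {a i} *
          ∑ j ∈ Ico (i+1) (r+1), Ideal.span {∏ l ∈ Ico (i+1) j, a l} * pn j := by
      rw [Finset.mul_sum]
      refine sum_congr rfl fun j hj => ?_
      have hij : i < j := by have := (mem_Ico.mp hj).1; omega
      rw [Finset.prod_eq_prod_Ico_succ_bot hij, ← Ideal.span_singleton_mul_span_singleton,
        mul_assoc]
    rw [hsum2, Finset.prod_eq_prod_Ico_succ_bot hir, Ideal.add_eq_sup] at hmem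
    obtain ⟨x, hx, y, hy, hxy⟩ := Submodule.mem_sup.mp hmem
    obtain ⟨z, hz, hzy⟩ := Ideal.mem_span_singleton_mul.mp hy
    have hkey : a i * (s * ∏ l ∈ Ico (i+1) r, a l - z) ∈ pn i := by
      have : a i * (s * ∏ l ∈ Ico (i+1) r, a l - z)
          = s * (a i * ∏ l ∈ Ico (i+1) r, a l) - a i * z := by ring
      rw [this, hzy, ← hxy]
      simpa using hx
    have hmem2 : s * ∏ l ∈ Ico (i+1) r, a l - z ∈ pn i :=
      ((hpn i).mem_or_mem hkey).resolve_left (ha i hir)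
    have hpnle : pn (i+1) ≤ ∑ j ∈ Ico (i+1) (r+1), Ideal.span {∏ l ∈ Ico (i+1) j, a l} * pn j := by
      rw [Finset.sum_eq_sum_Ico_succ_bot (by omega : i + 1 < r + 1), Ico_self,
        prod_empty, Ideal.span_singleton_one, Ideal.top_mul, Ideal.add_eq_sup]
      exact le_sup_left
    have : s * ∏ l ∈ Ico (i+1) r, a l
        ∈ ∑ j ∈ Ico (i+1) (r+1), Ideal.span {∏ l ∈ Ico (i+1) j, a l} * pn j := by
      have hsz : s * ∏ l ∈ Ico (i+1) r, a l = (s * ∏ l ∈ Ico (i+1) r, a l - z) + z := by ring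
      rw [hsz]
      exact Submodule.add_mem _ (hpnle (hmono i hir hmem2)) hz
    exact ih (i+1) (by omega) this

lemma auxE_avoid (pn : ℕ → Ideal A) (hpn : ∀ k, (pn k).IsPrime)
    (hcontr : ∀ I : Ideal A, Ideal.comap φ (Ideal.map φ I) = I) (r : ℕ)
    (hmono : ∀ i, i < r → pn i ≤ pn (i+1)) (s : A) (hs : s ∉ pn r) :
    φ s ∉ auxE φ pn hpn r := by
  intro h
  obtain ⟨a, ha, hmem⟩ := auxE_unwind φ pn hpn r _ h
  rw [← map_mul] at hmem
  have h2 : s * ∏ l ∈ range r, a l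
      ∈ ∑ j ∈ range (r+1), Ideal.span {∏ l ∈ range j, a l} * pn j := by
    rw [← hcontr (∑ j ∈ range (r+1), Ideal.span {∏ l ∈ range j, a l} * pn j)]
    exact Ideal.mem_comap.mpr hmem
  simp only [range_eq_Ico] at h2
  exact hs (peel pn hpn r hmono a ha s r 0 (by omega) h2)
lemma step_lemma (pn : ℕ → Ideal A) (hpn : ∀ k, (pn k).IsPrime) (k : ℕ)
    (Q : Ideal B) (hQ : Q.IsPrime) (hEQ : auxE φ pn hpn (k+1) ≤ Q) :
    ∃ Q' : Ideal B, Q'.IsPrime ∧ auxE φ pn hpn k ≤ Q' ∧ Q' ≤ Q ∧ Ideal.comap φ Q' = pn k := by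
  have hE : auxE φ pn hpn (k+1)
      = (pn (k+1)).map φ ⊔ auxQ φ (pn k) (hpn k) (auxE φ pn hpn k) := rfl
  have h1Q : (1 : B) ∉ Q := fun h => hQ.ne_top ((Ideal.eq_top_iff_one Q).mpr h)
  have h1p : (1 : A) ∉ pn k := fun h => (hpn k).ne_top ((Ideal.eq_top_iff_one _).mpr h)
  let S : Submonoid B := {
    carrier := {x | ∃ t, t ∉ Q ∧ ∃ a, a ∉ pn k ∧ x = t * φ a}
    mul_mem' := by
      rintro x y ⟨t, ht, a, ha, rfl⟩ ⟨t', ht', a', ha', rfl⟩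
      refine ⟨t * t', fun h => ((hQ.mem_or_mem h).elim ht ht'),
        a * a', fun h => (((hpn k).mem_or_mem h).elim ha ha'), ?_⟩
      simp only [map_mul]; ring
    one_mem' := ⟨1, h1Q, 1, h1p, by simp⟩ }
  have hdisj : Disjoint ((auxE φ pn hpn k : Ideal B) : Set B) (S : Set B) := by
    rw [Set.disjoint_left]
    rintro x hx ⟨t, ht, a, ha, rfl⟩
    have htQ : t ∈ auxQ φ (pn k) (hpn k) (auxE φ pn hpn k) := ⟨a, ha, hx⟩
    have : t ∈ auxE φ pn hpn (k+1) := by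
      rw [hE]; exact Submodule.mem_sup_right htQ
    exact ht (hEQ this)
  obtain ⟨Q', hQ'prime, hle, hdisj'⟩ := Ideal.exists_le_prime_disjoint _ S hdisj
  refine ⟨Q', hQ'prime, hle, ?_, ?_⟩
  · intro t ht'
    by_contra htQ
    exact Set.disjoint_left.mp hdisj' ht' ⟨t, htQ, 1, h1p, by simp⟩
  · refine le_antisymm ?_ (Ideal.map_le_iff_le_comap.mp
      (le_trans (map_le_auxE φ pn hpn k) hle))
    intro s hs
    by_contra hsp
    exact Set.disjoint_left.mp hdisj' (Ideal.mem_comap.mp hs) ⟨1, h1Q, s, hsp, by simp⟩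

lemma base_lemma (pn : ℕ → Ideal A) (hpn : ∀ k, (pn k).IsPrime)
    (hcontr : ∀ I : Ideal A, Ideal.comap φ (Ideal.map φ I) = I) (r : ℕ)
    (hmono : ∀ i, i < r → pn i ≤ pn (i+1)) :
    ∃ Q : Ideal B, Q.IsPrime ∧ auxE φ pn hpn r ≤ Q ∧ Ideal.comap φ Q = pn r := by
  have h1p : (1 : A) ∉ pn r := fun h => (hpn r).ne_top ((Ideal.eq_top_iff_one _).mpr h)
  let S : Submonoid B := {
    carrier := {x | ∃ a, a ∉ pn r ∧ x = φ a}
    mul_mem' := by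
      rintro x y ⟨a, ha, rfl⟩ ⟨a', ha', rfl⟩
      exact ⟨a * a', fun h => (((hpn r).mem_or_mem h).elim ha ha'), by simp [map_mul]⟩
    one_mem' := ⟨1, h1p, by simp⟩ }
  have hdisj : Disjoint ((auxE φ pn hpn r : Ideal B) : Set B) (S : Set B) := by
    rw [Set.disjoint_left]
    rintro x hx ⟨a, ha, rfl⟩
    exact auxE_avoid φ pn hpn hcontr r hmono a ha hx
  obtain ⟨Q, hQprime, hle, hdisj'⟩ := Ideal.exists_le_prime_disjoint _ S hdisj
  refine ⟨Q, hQprime, hle, le_antisymm ?_ (Ideal.map_le_iff_le_comap.mp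
      (le_trans (map_le_auxE φ pn hpn r) hle))⟩
  intro s hs
  by_contra hsp
  exact Set.disjoint_left.mp hdisj' (Ideal.mem_comap.mp hs) ⟨s, hsp, rfl⟩

end

/-- If every ideal of `A` is contracted from `B`, then every strictly
increasing chain of primes of `A` lifts to a strictly increasing chain of primes of `B`. -/
theorem stmt_5 {A B : Type*} [CommRing A] [CommRing B] (φ : A →+* B)
    (hcontr : ∀ I : Ideal A, Ideal.comap φ (Ideal.map φ I) = I)
    (r : ℕ) (p : Fin (r + 1) → Ideal A) (hp : StrictMono p)
    (hprime : ∀ i, (p i).IsPrime) :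
    ∃ q : Fin (r + 1) → Ideal B, StrictMono q ∧ (∀ i, (q i).IsPrime) ∧
      ∀ i, Ideal.comap φ (q i) = p i := by
  let pn : ℕ → Ideal A := fun k => p ⟨min k r, Nat.lt_succ_of_le (Nat.min_le_right k r)⟩
  have hpn : ∀ k, (pn k).IsPrime := fun k => hprime _
  have hpk : ∀ (k) (hk : k ≤ r), pn k = p ⟨k, Nat.lt_succ_of_le hk⟩ := by
    intro k hk
    show p _ = p _
    exact congrArg p (Fin.ext (min_eq_left hk))
  have hmono : ∀ i, i < r → pn i ≤ pn (i+1) := by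
    intro i hi
    rw [hpk i (le_of_lt hi), hpk (i+1) hi]
    exact le_of_lt (hp (by simp [Fin.lt_def]))
  have main : ∀ m, m ≤ r → ∃ q : ℕ → Ideal B,
      (∀ k, r - m ≤ k → k ≤ r →
        ((q k).IsPrime ∧ auxE φ pn hpn k ≤ q k ∧ Ideal.comap φ (q k) = pn k)) ∧
      (∀ k, r - m ≤ k → k < r → q k ≤ q (k+1)) := by
    intro m
    induction m with
    | zero =>
      intro _
      obtain ⟨Q, h1, h2, h3⟩ := base_lemma φ pn hpn hcontr r hmono
      refine ⟨fun _ => Q, ?_, ?_⟩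
      · intro k hk1 hk2
        have hkr : k = r := by omega
        subst hkr
        exact ⟨h1, h2, h3⟩
      · intro k hk1 hk2
        exact absurd hk2 (by omega)
    | succ m ih =>
      intro hm
      obtain ⟨q, hq1, hq2⟩ := ih (by omega)
      have hQp := hq1 (r - (m+1) + 1) (by omega) (by omega)
      obtain ⟨Q', hQ'1, hQ'2, hQ'3, hQ'4⟩ :=
        step_lemma φ pn hpn (r - (m+1)) (q (r - (m+1) + 1)) hQp.1 hQp.2.1
      refine ⟨fun k => if k = r - (m+1) then Q' else q k, ?_, ?_⟩
      · intro k hk1 hk2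
        by_cases h : k = r - (m+1)
        · subst h
          simp only [if_pos rfl]
          exact ⟨hQ'1, hQ'2, hQ'4⟩
        · simp only [if_neg h]
          exact hq1 k (by omega) hk2
      · intro k hk1 hk2
        by_cases h : k = r - (m+1)
        · subst h
          rw [show (fun k => if k = r - (m+1) then Q' else q k) (r - (m+1)) = Q'
              from if_pos rfl,
            show (fun k => if k = r - (m+1) then Q' else q k) (r - (m+1) + 1)
                = q (r - (m+1) + 1) from if_neg (by omega)]
          exact hQ'3
        · simp only [if_neg h, if_neg (show ¬ k + 1 = r - (m+1) by omega)]
          exact hq2 k (by omega) hk2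
  obtain ⟨q, hq1, hq2⟩ := main r le_rfl
  refine ⟨fun i => q i.val, ?_, ?_, ?_⟩
  · rw [Fin.strictMono_iff_lt_succ]
    intro i
    have hi : i.val < r := i.isLt
    show q i.val < q (i.val + 1)
    have hle : q i.val ≤ q (i.val + 1) := hq2 i.val (by omega) hi
    have hc1 := (hq1 i.val (by omega) (by omega)).2.2
    have hc2 := (hq1 (i.val + 1) (by omega) (by omega)).2.2
    refine lt_of_le_of_ne hle (fun hEq => ?_)
    have : pn i.val = pn (i.val + 1) := by rw [← hc1, ← hc2, hEq]
    rw [hpk i.val (by omega), hpk (i.val + 1) (by omega)] at this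
    exact absurd (hp.injective this) (by simp [Fin.ext_iff])
  · intro i
    have hi : i.val ≤ r := Nat.lt_succ_iff.mp i.isLt
    exact (hq1 i.val (by omega) hi).1
  · intro i
    have hi : i.val ≤ r := Nat.lt_succ_iff.mp i.isLt
    rw [(hq1 i.val (by omega) hi).2.2, hpk i.val hi]
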